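/- As formal power series in t over ℝ, the q-Bernoulli number generating series B_q(t) = Σ_{n≥0} b_{n,q} t^n/[n]_q! satisfies t · D_{q,t} B_q(t) = B_q(qt) · ( −t/[2]_q − q^{-1} Σ_{n≥2} b_{n,q} t^n/[n]_q! ), where D_{q,t} is the q-derivative on formal power series, D_{q,t}(t^n) = [n]_q t^{n-1}, and B_q(qt) denotes the series obtained by substituting qt for t. -/

import Mathlib

open Polynomial Finset

/-- The q-integer [n]_q = 1 + q + ... + q^(n-1). -/
noncomputable def qInt (q : ℝ) (n : ℕ) : ℝ := ∑ i ∈ Finset.range n, q ^ i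

/-- The q-factorial [n]_q! = [1]_q [2]_q ... [n]_q, with [0]_q! = 1. -/
noncomputable def qFact (q : ℝ) : ℕ → ℝ
  | 0 => 1
  | n + 1 => qFact q n * qInt q (n + 1)

/-- The q-binomial coefficient [n choose k]_q = [n]_q! / ([k]_q! [n-k]_q!). -/
noncomputable def qBinom (q : ℝ) (n k : ℕ) : ℝ := qFact q n / (qFact q k * qFact q (n - k))

/-- The q-derivative on real polynomials, determined by D_q(x^n) = [n]_q x^(n-1). -/
noncomputable def qDeriv (q : ℝ) (p : Polynomial ℝ) : Polynomial ℝ :=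
  p.sum fun n a => Polynomial.C (a * qInt q n) * Polynomial.X ^ (n - 1)

/-- The q-derivative on formal power series: `D_{q,t}(t^n) = [n]_q t^(n-1)`. -/
noncomputable def qDerivPS (q : ℝ) (f : PowerSeries ℝ) : PowerSeries ℝ :=
  PowerSeries.mk fun n => qInt q (n + 1) * PowerSeries.coeff (n + 1) f

/-- The q-exponential series `e_q(t) = Σ_{n≥0} t^n/[n]_q!`. -/
noncomputable def qExp (q : ℝ) : PowerSeries ℝ := PowerSeries.mk fun n => 1 / qFact q n

lemma qInt_pos {q : ℝ} (hq0 : 0 < q) {n : ℕ} (hn : 0 < n) : 0 < qInt q n := by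
  unfold qInt
  exact Finset.sum_pos (fun i _ => pow_pos hq0 i) (Finset.nonempty_range_iff.mpr hn.ne')

lemma qFact_pos {q : ℝ} (hq0 : 0 < q) (n : ℕ) : 0 < qFact q n := by
  induction n with
  | zero => norm_num [qFact]
  | succ n ih => exact mul_pos ih (qInt_pos hq0 n.succ_pos)

lemma qDeriv_key (q : ℝ) (f : PowerSeries ℝ) :
    PowerSeries.C (q - 1) * (PowerSeries.X * qDerivPS q f)
      = PowerSeries.rescale q f - f := by
  ext n
  cases n with
  | zero =>
    rw [PowerSeries.coeff_C_mul, PowerSeries.coeff_zero_X_mul, map_sub,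
      PowerSeries.coeff_rescale]
    simp
  | succ n =>
    rw [PowerSeries.coeff_C_mul, PowerSeries.coeff_succ_X_mul, map_sub,
      PowerSeries.coeff_rescale]
    simp only [qDerivPS, PowerSeries.coeff_mk]
    have h : (q - 1) * qInt q (n + 1) = q ^ (n + 1) - 1 := by
      unfold qInt; exact mul_geom_sum q (n + 1)
    linear_combination (PowerSeries.coeff (n + 1) f) * h

lemma qExp_rescale (q : ℝ) (hq0 : 0 < q) :
    PowerSeries.rescale q (qExp q)
      = qExp q + PowerSeries.C (q - 1) * (PowerSeries.X * qExp q) := by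
  ext n
  cases n with
  | zero => simp [qExp, PowerSeries.coeff_rescale, qFact]
  | succ n =>
    rw [map_add, PowerSeries.coeff_rescale]
    rw [PowerSeries.coeff_C_mul, PowerSeries.coeff_succ_X_mul]
    simp only [qExp, PowerSeries.coeff_mk]
    have h1 : qFact q (n + 1) = qFact q n * qInt q (n + 1) := rfl
    have h2 : (q - 1) * qInt q (n + 1) = q ^ (n + 1) - 1 := by
      unfold qInt; exact mul_geom_sum q (n + 1)
    have hf : qFact q n ≠ 0 := (qFact_pos hq0 n).ne'
    have hi : qInt q (n + 1) ≠ 0 := (qInt_pos hq0 n.succ_pos).ne'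
    rw [h1]
    field_simp
    linear_combination (-1) * h2

/-- The q-Bernoulli number generating series `B_q(t) = Σ b_{n,q} t^n/[n]_q!` satisfies
`t · D_{q,t} B_q(t) = B_q(qt) · (−t/[2]_q − q⁻¹ Σ_{n≥2} b_{n,q} t^n/[n]_q!)`. -/
theorem qBernoulli_series_structure (q : ℝ) (hq0 : 0 < q) (hq1 : q < 1)
    (b : ℕ → ℝ)
    (hb : (qExp q - 1) * PowerSeries.mk (fun n => b n / qFact q n) = PowerSeries.X) :
    PowerSeries.X * qDerivPS q (PowerSeries.mk fun n => b n / qFact q n)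
      = PowerSeries.rescale q (PowerSeries.mk fun n => b n / qFact q n)
        * (-(PowerSeries.C (1 / qInt q 2)) * PowerSeries.X
            - PowerSeries.C q⁻¹
              * PowerSeries.mk (fun n => if 2 ≤ n then b n / qFact q n else 0)) := by
  set B := PowerSeries.mk (fun n => b n / qFact q n) with hBdef
  have hf1 : qFact q 1 = 1 := by simp [qFact, qInt]
  have hI2 : qInt q 2 ≠ 0 := (qInt_pos hq0 two_pos).ne'
  have hb0 : b 0 = 1 := by
    have h := congrArg (PowerSeries.coeff 1) hb
    rw [PowerSeries.coeff_mul, Finset.Nat.sum_antidiagonal_eq_sum_range_succ_mk] at h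
    simp [Finset.sum_range_succ, qExp, PowerSeries.coeff_one, PowerSeries.coeff_X,
      hBdef, qFact, qInt] at h
    exact h
  have hb1 : b 1 = -(1 / qInt q 2) := by
    have h := congrArg (PowerSeries.coeff 2) hb
    rw [PowerSeries.coeff_mul, Finset.Nat.sum_antidiagonal_eq_sum_range_succ_mk] at h
    simp [Finset.sum_range_succ, qExp, PowerSeries.coeff_one, PowerSeries.coeff_X,
      hBdef, qFact, qInt, hb0] at h
    have hq2 : qInt q 2 = 1 + q := by simp [qInt, Finset.sum_range_succ]
    rw [hq2, one_div]
    linarith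
  have hS : -(PowerSeries.C (1 / qInt q 2)) * PowerSeries.X
      - PowerSeries.C q⁻¹ * PowerSeries.mk (fun n => if 2 ≤ n then b n / qFact q n else 0)
      = PowerSeries.C q⁻¹ * (1 - B - PowerSeries.X) := by
    ext n
    match n with
    | 0 => simp [hBdef, hb0, qFact]
    | 1 =>
      simp [hBdef, hb1, hf1, PowerSeries.coeff_one, PowerSeries.coeff_X, PowerSeries.coeff_C_mul]
      have hq2 : qInt q 2 = 1 + q := by simp [qInt, Finset.sum_range_succ]
      field_simp
      rw [hq2]
      ring
    | (n + 2) =>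
      simp [hBdef, PowerSeries.coeff_one, PowerSeries.coeff_X, PowerSeries.coeff_C_mul]
  rw [hS]
  have hE : qExp q - 1 ≠ 0 := by
    intro h
    have := congrArg (PowerSeries.coeff 1) h
    simp [qExp, PowerSeries.coeff_one, hf1] at this
  have hC : PowerSeries.C (q - 1) ≠ 0 := by
    intro h
    have := congrArg (PowerSeries.coeff 0) h
    simp at this
    exact absurd this (sub_ne_zero.mpr hq1.ne)
  have h2 : (qExp q + PowerSeries.C (q - 1) * (PowerSeries.X * qExp q) - 1)
      * PowerSeries.rescale q B = PowerSeries.C q * PowerSeries.X := by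
    have h := congrArg (PowerSeries.rescale q) hb
    rw [map_mul, map_sub, map_one, PowerSeries.rescale_X, qExp_rescale q hq0] at h
    exact h
  have hc2 : PowerSeries.C q⁻¹ * PowerSeries.C q = 1 := by
    rw [← map_mul, inv_mul_cancel₀ hq0.ne', map_one]
  have hc3 : PowerSeries.C (q - 1) + 1 = PowerSeries.C q := by
    rw [← map_one PowerSeries.C, ← map_add]
    norm_num
  apply mul_left_cancel₀ hC
  apply mul_left_cancel₀ hE
  rw [qDeriv_key q B]
  linear_combination
    (PowerSeries.C (q - 1) * PowerSeries.C q⁻¹ * PowerSeries.rescale q B - 1) * hb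
    + (1 - PowerSeries.C (q - 1) * PowerSeries.C q⁻¹) * h2
    + PowerSeries.C (q - 1) * PowerSeries.X * (qExp q * PowerSeries.rescale q B - 1) * hc2
    + PowerSeries.X * (PowerSeries.C (q - 1) * PowerSeries.C q⁻¹ * qExp q * PowerSeries.rescale q B - 1) * hc3
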